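/- Let A be a real symmetric N×N matrix and B a real N×M matrix. The controllability matrix [B, AB, A²B, …, A^{N−1}B] has rank N (equivalently, the columns of the matrices A^k B for 0 ≤ k ≤ N−1 span ℝ^N) if and only if there is no nonzero vector y ∈ ℝ^N and real number λ with A y = λ y and Bᵀ y = 0. -/

import Mathlib

open Matrix

private lemma kalman_rank_iff_ker (N : ℕ) (m : Type*) [Fintype m] (C : Matrix (Fin N) m ℝ) :
    C.rank = N ↔ ∀ y : Fin N → ℝ, Cᵀ *ᵥ y = 0 → y = 0 := by
  have h1 : Cᵀ.rank + Module.finrank ℝ (LinearMap.ker Cᵀ.mulVecLin) = N := by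
    simpa [Matrix.rank] using LinearMap.finrank_range_add_finrank_ker Cᵀ.mulVecLin
  rw [← Matrix.rank_transpose]
  constructor
  · intro h y hy
    have h0 : Module.finrank ℝ (LinearMap.ker Cᵀ.mulVecLin) = 0 := by omega
    have hbot : LinearMap.ker Cᵀ.mulVecLin = ⊥ := Submodule.finrank_eq_zero.mp h0
    have hm : y ∈ LinearMap.ker Cᵀ.mulVecLin := by
      rw [LinearMap.mem_ker, Matrix.mulVecLin_apply]; exact hy
    rw [hbot, Submodule.mem_bot] at hm; exact hm
  · intro h
    have hbot : LinearMap.ker Cᵀ.mulVecLin = ⊥ := by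
      rw [LinearMap.ker_eq_bot']
      intro y hy
      exact h y (by rw [← Matrix.mulVecLin_apply]; exact hy)
    rw [hbot] at h1
    simpa using h1

private lemma kalman_kernel_iff (N M : ℕ) (A : Matrix (Fin N) (Fin N) ℝ)
    (B : Matrix (Fin N) (Fin M) ℝ) (hA : A.IsSymm) (y : Fin N → ℝ) :
    (Matrix.of fun (i : Fin N) (p : Fin N × Fin M) => (A ^ (p.1 : ℕ) * B) i p.2)ᵀ *ᵥ y = 0 ↔
      ∀ k : Fin N, Bᵀ *ᵥ (A ^ (k : ℕ) *ᵥ y) = 0 := by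
  have key : ∀ k : ℕ, Bᵀ *ᵥ (A ^ k *ᵥ y) = (A ^ k * B)ᵀ *ᵥ y := by
    intro k
    rw [mulVec_mulVec, transpose_mul, (hA.pow k)]
  rw [funext_iff, Prod.forall]
  constructor
  · intro h k
    rw [key]
    funext j
    simpa [mulVec, dotProduct] using h k j
  · intro h k j
    have := congrFun ((key k) ▸ h k) j
    simpa [mulVec, dotProduct] using this

private lemma kalman_eigen_of_ker (N M : ℕ) (A : Matrix (Fin N) (Fin N) ℝ)
    (B : Matrix (Fin N) (Fin M) ℝ)
    (hA : A.IsHermitian) (y : Fin N → ℝ) (hy : y ≠ 0)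
    (h : ∀ k : Fin N, Bᵀ *ᵥ (A ^ (k : ℕ) *ᵥ y) = 0) :
    ∃ (z : Fin N → ℝ) (l : ℝ), z ≠ 0 ∧ A *ᵥ z = l • z ∧ Bᵀ *ᵥ z = 0 := by
  set b := hA.eigenvectorBasis with hb
  set μ := hA.eigenvalues with hμ
  set v : Fin N → (Fin N → ℝ) := fun i => ⇑(b i) with hv
  set yE : EuclideanSpace ℝ (Fin N) := WithLp.toLp 2 y with hyE
  set c : Fin N → ℝ := fun i => b.repr yE i with hc
  have hsum : ∑ i, c i • v i = y := by
    have := congrArg WithLp.ofLp (b.sum_repr yE)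
    simpa [v, c, yE] using this
  have heig : ∀ i, A *ᵥ v i = μ i • v i := fun i => hA.mulVec_eigenvectorBasis i
  have heigk : ∀ (k : ℕ) (i : Fin N), A ^ k *ᵥ v i = (μ i ^ k) • v i := by
    intro k i
    induction k with
    | zero => simp
    | succ k ih =>
      rw [pow_succ, ← mulVec_mulVec, heig, mulVec_smul, ih, smul_smul, pow_succ, mul_comm]
  have horth : ∀ i j, v i ⬝ᵥ v j = if i = j then (1:ℝ) else 0 := by
    intro i j
    have := (orthonormal_iff_ite.mp b.orthonormal) i j
    simpa [PiLp.inner_apply, dotProduct, RCLike.inner_apply, mul_comm] using this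
  have ha : ∀ k : ℕ, A ^ k *ᵥ y = ∑ i, (μ i ^ k * c i) • v i := by
    intro k
    conv_lhs => rw [← hsum]
    rw [← mulVecLin_apply, map_sum]
    refine Finset.sum_congr rfl fun i _ => ?_
    rw [LinearMap.map_smul, mulVecLin_apply, heigk, smul_smul, mul_comm]
  classical
  set s : Finset ℝ := Finset.image μ Finset.univ with hs
  set z : ℝ → (Fin N → ℝ) := fun t => ∑ i ∈ Finset.univ.filter (fun i => μ i = t), c i • v i
    with hz
  set u : ℝ → (Fin M → ℝ) := fun t => Bᵀ *ᵥ z t with hu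
  have hAz : ∀ t, A *ᵥ z t = t • z t := by
    intro t
    rw [hz]
    simp only
    rw [← mulVecLin_apply, map_sum, Finset.smul_sum]
    refine Finset.sum_congr rfl fun i hi => ?_
    rw [Finset.mem_filter] at hi
    rw [LinearMap.map_smul, mulVecLin_apply, heig, hi.2, smul_comm]
  have hsumz : ∀ k : ℕ, ∑ t ∈ s, t ^ k • z t = A ^ k *ᵥ y := by
    intro k
    rw [ha k, ← Finset.sum_fiberwise_of_maps_to (g := μ)
      (fun i _ => Finset.mem_image_of_mem μ (Finset.mem_univ i))
      (fun i => (μ i ^ k * c i) • v i)]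
    refine Finset.sum_congr rfl fun t _ => ?_
    rw [hz]
    simp only [Finset.smul_sum]
    refine Finset.sum_congr rfl fun i hi => ?_
    rw [Finset.mem_filter] at hi
    rw [smul_smul, ← hi.2, mul_comm (μ i ^ k) (c i)]
  have husum : ∀ k ∈ Finset.range N, ∑ t ∈ s, t ^ k • u t = 0 := by
    intro k hk
    have : ∑ t ∈ s, t ^ k • u t = Bᵀ *ᵥ (A ^ k *ᵥ y) := by
      rw [← hsumz k, ← mulVecLin_apply, map_sum]
      refine Finset.sum_congr rfl fun t _ => ?_
      rw [LinearMap.map_smul, mulVecLin_apply]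
    rw [this]
    exact h ⟨k, Finset.mem_range.mp hk⟩
  have huz : ∀ t1 ∈ s, u t1 = 0 := by
    intro t1 ht1
    set p : Polynomial ℝ := Lagrange.basis s id t1 with hp
    have hinj : Set.InjOn id (s : Set ℝ) := Function.injective_id.injOn
    have hdeg : p.natDegree < N := by
      have h1 : p.natDegree = s.card - 1 := Lagrange.natDegree_basis hinj ht1
      have h2 : s.card ≤ N := le_trans (Finset.card_image_le) (by simp)
      have h3 : 0 < s.card := Finset.card_pos.mpr ⟨t1, ht1⟩
      omega
    have heval : ∀ t ∈ s, p.eval t = ∑ k ∈ Finset.range N, p.coeff k * t ^ k := by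
      intro t _
      exact Polynomial.eval_eq_sum_range' hdeg t
    have key : ∑ t ∈ s, p.eval t • u t = u t1 := by
      rw [Finset.sum_eq_single t1]
      · have h1 : p.eval t1 = 1 := Lagrange.eval_basis_self (F := ℝ) (v := id) hinj ht1
        rw [h1, one_smul]
      · intro t ht hne
        have h2 : p.eval t = 0 := Lagrange.eval_basis_of_ne (F := ℝ) (v := id) (Ne.symm hne) ht
        rw [h2, zero_smul]
      · intro hnot; exact absurd ht1 hnot
    rw [← key]
    calc ∑ t ∈ s, p.eval t • u t
        = ∑ t ∈ s, ∑ k ∈ Finset.range N, (p.coeff k * t ^ k) • u t := by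
          refine Finset.sum_congr rfl fun t ht => ?_
          rw [heval t ht, Finset.sum_smul]
      _ = ∑ k ∈ Finset.range N, p.coeff k • (∑ t ∈ s, t ^ k • u t) := by
          rw [Finset.sum_comm]
          refine Finset.sum_congr rfl fun k _ => ?_
          rw [Finset.smul_sum]
          refine Finset.sum_congr rfl fun t _ => ?_
          rw [smul_smul]
      _ = 0 := by
          refine Finset.sum_eq_zero fun k hk => ?_
          rw [husum k hk, smul_zero]
  have hcne : ∃ i0, c i0 ≠ 0 := by
    by_contra hall
    push_neg at hall
    apply hy
    rw [← hsum]
    exact Finset.sum_eq_zero fun i _ => by rw [hall i, zero_smul]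
  obtain ⟨i0, hi0⟩ := hcne
  refine ⟨z (μ i0), μ i0, ?_, hAz _, huz _ (Finset.mem_image_of_mem μ (Finset.mem_univ i0))⟩
  intro hz0
  apply hi0
  have hdot : v i0 ⬝ᵥ z (μ i0) = c i0 := by
    have hzz : z (μ i0) = ∑ i ∈ Finset.univ.filter (fun i => μ i = μ i0), c i • v i := rfl
    rw [hzz]
    simp only [dotProduct, Finset.sum_apply, Pi.smul_apply, smul_eq_mul, Finset.mul_sum]
    rw [Finset.sum_comm]
    have hterm : ∀ i, (∑ x, v i0 x * (c i * v i x)) = c i * (if i0 = i then 1 else 0) := by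
      intro i
      rw [← horth i0 i]
      simp only [dotProduct, Finset.mul_sum]
      exact Finset.sum_congr rfl fun x _ => by ring
    rw [Finset.sum_congr rfl fun i _ => hterm i]
    simp only [mul_ite, mul_one, mul_zero]
    rw [Finset.sum_ite_eq]
    simp
  rw [hz0] at hdot
  simpa using hdot.symm

/-- **Kalman rank condition / PBH test for symmetric matrices.**
For a real symmetric `N × N` matrix `A` and a real `N × M` matrix `B`, the
controllability matrix `[B, AB, A²B, …, A^{N−1}B]` has rank `N` if and only if
there is no nonzero vector `y` and real `λ` with `A y = λ y` and `Bᵀ y = 0`. -/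
theorem stmt_0 (N M : ℕ) (A : Matrix (Fin N) (Fin N) ℝ) (B : Matrix (Fin N) (Fin M) ℝ)
    (hA : A.IsSymm) :
    (Matrix.of fun (i : Fin N) (p : Fin N × Fin M) => (A ^ (p.1 : ℕ) * B) i p.2).rank = N ↔
      ¬ ∃ (y : Fin N → ℝ) (l : ℝ), y ≠ 0 ∧ A *ᵥ y = l • y ∧ Bᵀ *ᵥ y = 0 := by
  have hH : A.IsHermitian := by
    rw [Matrix.IsHermitian, Matrix.conjTranspose_eq_transpose_of_trivial]
    exact hA
  rw [kalman_rank_iff_ker]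
  constructor
  · intro h
    rintro ⟨y, l, hy, hAy, hBy⟩
    apply hy
    apply h y
    rw [kalman_kernel_iff N M A B hA y]
    intro k
    have hpow : ∀ m : ℕ, A ^ m *ᵥ y = l ^ m • y := by
      intro m
      induction m with
      | zero => simp
      | succ m ih =>
        rw [pow_succ, ← mulVec_mulVec, hAy, mulVec_smul, ih, smul_smul, pow_succ, mul_comm]
    rw [hpow, mulVec_smul, hBy, smul_zero]
  · intro h y hy
    by_contra hy0
    apply h
    exact kalman_eigen_of_ker N M A B hH y hy0 ((kalman_kernel_iff N M A B hA y).mp hy)
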